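/- The function φ₁ is square integrable on ℝ, for every ω > 0 one has ∫_ℝ φ_ω(x)² dx = ω^{(5-p)/(2(p-1))} · ∫_ℝ φ₁(x)² dx, and (since p > 5) the map ω ↦ ∫_ℝ φ_ω(x)² dx is strictly decreasing on (0,∞); in particular its derivative d(‖φ_ω‖_{L²}²)/dω is nonzero for every ω > 0. -/

import Mathlib

noncomputable section

open Real MeasureTheory

/-- `sech y = 1 / cosh y`. -/
def sech (y : ℝ) : ℝ := 1 / Real.cosh y

/-- The ground state profile `φ_ω(x) = (ω(p+1)/2)^{1/(p-1)} (sech(((p-1)/2)√ω x))^{2/(p-1)}`. -/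
def phi (p ω x : ℝ) : ℝ :=
  (ω * (p + 1) / 2) ^ (1 / (p - 1)) * sech ((p - 1) / 2 * Real.sqrt ω * x) ^ (2 / (p - 1))

lemma sech_pos (y : ℝ) : 0 < sech y := by
  unfold sech; positivity

lemma sech_le (y : ℝ) : sech y ≤ 2 * Real.exp (-y) := by
  unfold sech
  rw [div_le_iff₀ (Real.cosh_pos y)]
  have h : Real.cosh y = (Real.exp y + Real.exp (-y)) / 2 := Real.cosh_eq y
  have h1 : (0:ℝ) < Real.exp (-y) := Real.exp_pos _
  have h2 : (0:ℝ) < Real.exp y := Real.exp_pos _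
  have h3 : Real.exp (-y) * Real.exp y = 1 := by
    rw [← Real.exp_add]; simp
  nlinarith [Real.exp_pos y]

lemma integrable_of_even {f : ℝ → ℝ} (he : ∀ x, f (-x) = f x)
    (h : IntegrableOn f (Set.Ioi 0)) : Integrable f := by
  have int_Iic : IntegrableOn f (Set.Iic 0) := by
    rw [← Measure.map_neg_eq_self (volume : Measure ℝ)]
    have m : MeasurableEmbedding fun x : ℝ => -x :=
      (Homeomorph.neg ℝ).measurableEmbedding
    rw [m.integrableOn_map_iff]
    simp_rw [Function.comp_def, he, Set.neg_preimage, Set.neg_Iic, neg_zero]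
    exact (integrableOn_Ici_iff_integrableOn_Ioi (hb := enorm_ne_top)).mpr h
  have := int_Iic.union h
  rwa [Set.Iic_union_Ioi, integrableOn_univ] at this

theorem ground_state_L2_norm (p : ℝ) (hp : 5 < p) :
    Integrable (fun x => phi p 1 x ^ 2) ∧
    (∀ ω > (0 : ℝ), ∫ x, phi p ω x ^ 2 =
      ω ^ ((5 - p) / (2 * (p - 1))) * ∫ x, phi p 1 x ^ 2) ∧
    StrictAntiOn (fun ω => ∫ x, phi p ω x ^ 2) (Set.Ioi 0) ∧
    ∀ ω > (0 : ℝ), deriv (fun ω' => ∫ x, phi p ω' x ^ 2) ω ≠ 0 := by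
  have hp1 : (0:ℝ) < p - 1 := by linarith
  have he : (0:ℝ) < 2 / (p - 1) := by positivity
  set a : ℝ := (p - 1) / 2 with ha
  have ha0 : 0 < a := by positivity
  -- continuity of phi p 1 squared
  have hcont : Continuous fun x => phi p 1 x ^ 2 := by
    unfold phi sech
    refine Continuous.pow ?_ 2
    refine Continuous.mul continuous_const ?_
    refine Continuous.rpow_const ?_ (fun x => Or.inr he.le)
    exact continuous_const.div (Real.continuous_cosh.comp (by continuity))
      (fun x => (Real.cosh_pos _).ne')
  -- bound : phi p 1 x ^ 2 ≤ C * exp (-2 x) for x ≥ 0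
  have hC : (0:ℝ) < ((p + 1) / 2) ^ (1 / (p - 1)) :=
    Real.rpow_pos_of_pos (by linarith) _
  -- integrability on Ioi 0 via bigO
  have hbound : ∀ x : ℝ, 0 ≤ x → |phi p 1 x ^ 2| ≤
      ((1 * (p + 1) / 2) ^ (1 / (p - 1)))^2 * (2 ^ (2/(p-1)))^2 * Real.exp (-2 * x) := by
    intro x hx
    have hsp := sech_pos (a * Real.sqrt 1 * x)
    have hb1 : sech ((p-1)/2 * Real.sqrt 1 * x) ^ (2/(p-1)) ≤
        2 ^ (2/(p-1)) * Real.exp (-x) := by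
      have h1 : sech ((p-1)/2 * Real.sqrt 1 * x) ≤ 2 * Real.exp (-(a * x)) := by
        rw [Real.sqrt_one, mul_one, ← ha]
        exact sech_le _
      calc sech ((p-1)/2 * Real.sqrt 1 * x) ^ (2/(p-1))
          ≤ (2 * Real.exp (-(a * x))) ^ (2/(p-1)) := by
            exact Real.rpow_le_rpow (sech_pos _).le h1 he.le
        _ = 2 ^ (2/(p-1)) * (Real.exp (-(a * x))) ^ (2/(p-1)) := by
            rw [Real.mul_rpow (by norm_num) (Real.exp_pos _).le]
        _ = 2 ^ (2/(p-1)) * Real.exp (-(a * x) * (2/(p-1))) := by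
            rw [← Real.exp_mul]
        _ = 2 ^ (2/(p-1)) * Real.exp (-x) := by
            congr 1
            congr 1
            field_simp [ha]
            ring
    have hnn : (0:ℝ) ≤ sech ((p-1)/2 * Real.sqrt 1 * x) ^ (2/(p-1)) :=
      Real.rpow_nonneg (sech_pos _).le _
    rw [abs_of_nonneg (by positivity)]
    unfold phi
    rw [mul_pow]
    have h2 : (sech ((p-1)/2 * Real.sqrt 1 * x) ^ (2/(p-1)))^2 ≤
        (2 ^ (2/(p-1)) * Real.exp (-x))^2 := by
      apply pow_le_pow_left₀ hnn hb1
    calc ((1 * (p + 1) / 2) ^ (1 / (p - 1)))^2 * (sech ((p-1)/2 * Real.sqrt 1 * x) ^ (2/(p-1)))^2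
        ≤ ((1 * (p + 1) / 2) ^ (1 / (p - 1)))^2 * (2 ^ (2/(p-1)) * Real.exp (-x))^2 := by
          apply mul_le_mul_of_nonneg_left h2 (by positivity)
      _ = ((1 * (p + 1) / 2) ^ (1 / (p - 1)))^2 * (2 ^ (2/(p-1)))^2 * Real.exp (-2 * x) := by
          have h3 : Real.exp (-2 * x) = (Real.exp (-x))^2 := by
            rw [← Real.exp_nat_mul]; norm_num
          rw [h3, mul_pow]; ring
  have hInt : Integrable (fun x => phi p 1 x ^ 2) := by
    apply integrable_of_even
    · intro x
      unfold phi sech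
      rw [mul_neg]
      simp [Real.cosh_neg]
    · apply integrable_of_isBigO_exp_neg (b := 2) (by norm_num) hcont.continuousOn
      apply Asymptotics.IsBigO.of_bound (((1 * (p + 1) / 2) ^ (1 / (p - 1)))^2 * (2 ^ (2/(p-1)))^2)
      filter_upwards [Filter.eventually_ge_atTop 0] with x hx
      have := hbound x hx
      simpa [Real.norm_eq_abs, abs_of_nonneg (Real.exp_pos (-2*x)).le, neg_mul] using this
  -- scaling
  have hscale : ∀ ω : ℝ, 0 < ω → ∀ x : ℝ,
      phi p ω x = ω ^ (1/(p-1)) * phi p 1 (Real.sqrt ω * x) := by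
    intro ω hω x
    unfold phi
    rw [Real.sqrt_one]
    have h1 : ω * (p+1) / 2 = ω * ((p+1)/2) := by ring
    rw [h1, Real.mul_rpow hω.le (by linarith : (0:ℝ) ≤ (p+1)/2)]
    have h2 : (p-1)/2 * 1 * (Real.sqrt ω * x) = (p-1)/2 * Real.sqrt ω * x := by ring
    have h3 : (1:ℝ) * (p+1)/2 = (p+1)/2 := by ring
    rw [h2, h3]
    ring
  have hsq : ∀ ω : ℝ, 0 < ω → ∀ x : ℝ,
      phi p ω x ^ 2 = ω ^ (2/(p-1)) * phi p 1 (Real.sqrt ω * x) ^ 2 := by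
    intro ω hω x
    rw [hscale ω hω x, mul_pow]
    congr 1
    rw [← Real.rpow_natCast (ω ^ (1/(p-1))) 2, ← Real.rpow_mul hω.le]
    congr 1
    push_cast
    ring
  have hkey : ∀ ω : ℝ, 0 < ω →
      ∫ x, phi p ω x ^ 2 = ω ^ ((5-p)/(2*(p-1))) * ∫ x, phi p 1 x ^ 2 := by
    intro ω hω
    have hsqrt : 0 < Real.sqrt ω := Real.sqrt_pos.mpr hω
    calc ∫ x, phi p ω x ^ 2
        = ∫ x, ω ^ (2/(p-1)) * (fun y => phi p 1 y ^ 2) (Real.sqrt ω * x) := by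
          refine integral_congr_ae (Filter.Eventually.of_forall fun x => ?_)
          exact hsq ω hω x
      _ = ω ^ (2/(p-1)) * ∫ x, (fun y => phi p 1 y ^ 2) (Real.sqrt ω * x) :=
          integral_const_mul _ _
      _ = ω ^ (2/(p-1)) * (|(Real.sqrt ω)⁻¹| • ∫ y, phi p 1 y ^ 2) := by
          rw [Measure.integral_comp_mul_left (fun y => phi p 1 y ^ 2) (Real.sqrt ω)]
      _ = ω ^ ((5-p)/(2*(p-1))) * ∫ x, phi p 1 x ^ 2 := by
          rw [abs_of_pos (inv_pos.mpr hsqrt), smul_eq_mul, ← mul_assoc]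
          congr 1
          rw [Real.sqrt_eq_rpow, ← Real.rpow_neg hω.le, ← Real.rpow_add hω]
          congr 1
          field_simp
          ring
  have hIpos : 0 < ∫ x, phi p 1 x ^ 2 := by
    rw [integral_pos_iff_support_of_nonneg (fun x => sq_nonneg _) hInt]
    have hphi_pos : ∀ x, 0 < phi p 1 x := by
      intro x
      exact mul_pos (Real.rpow_pos_of_pos (by linarith) _)
        (Real.rpow_pos_of_pos (sech_pos _) _)
    have hsupp : Function.support (fun x => phi p 1 x ^ 2) = Set.univ := by
      ext x
      simp only [Function.mem_support, Set.mem_univ, iff_true]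
      exact (pow_pos (hphi_pos x) 2).ne'
    rw [hsupp, Real.volume_univ]
    exact ENNReal.zero_lt_top
  have hq : (5-p)/(2*(p-1)) < 0 := div_neg_of_neg_of_pos (by linarith) (by linarith)
  refine ⟨hInt, fun ω hω => hkey ω hω, ?_, ?_⟩
  · intro x hx y hy hxy
    simp only
    rw [hkey x hx, hkey y hy]
    exact mul_lt_mul_of_pos_right (Real.rpow_lt_rpow_of_neg hx hxy hq) hIpos
  · intro ω hω
    have hev : (fun ω' => ∫ x, phi p ω' x ^ 2) =ᶠ[nhds ω]
        (fun ω' => ω' ^ ((5-p)/(2*(p-1))) * ∫ x, phi p 1 x ^ 2) := by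
      filter_upwards [IsOpen.mem_nhds isOpen_Ioi (Set.mem_Ioi.mpr hω)] with ω' hω'
      exact hkey ω' hω'
    rw [hev.deriv_eq]
    have hd : HasDerivAt (fun ω' : ℝ => ω' ^ ((5-p)/(2*(p-1))) * ∫ x, phi p 1 x ^ 2)
        ((5-p)/(2*(p-1)) * ω ^ ((5-p)/(2*(p-1)) - 1) * ∫ x, phi p 1 x ^ 2) ω :=
      (Real.hasDerivAt_rpow_const (Or.inl hω.ne')).mul_const _
    rw [hd.deriv]
    exact mul_ne_zero (mul_ne_zero hq.ne (Real.rpow_pos_of_pos hω _).ne') hIpos.ne'
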